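/- Let W be a uniformly recurrent infinite word over alphabet A with at most linear recurrence function P₂(k) ≤ C₃·k, and let ψ : A* → A* be the morphism that maps each letter a_i either to itself or to the empty word. If ψ(W) (the word obtained by deleting from W all letters erased by ψ) is infinite, then ψ(W) has at most linear recurrence function. -/
import Mathlib

/-- The factor (subword) of the infinite word `W` of length `n` starting at position `i`. -/
def factorAt {A : Type*} (W : ℕ → A) (i n : ℕ) : List A :=
  (List.range n).map (fun j => W (i + j))

/-- `u` is a finite factor of the infinite word `W`. -/
def IsFactorOf {A : Type*} (u : List A) (W : ℕ → A) : Prop :=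
  ∃ i, u = factorAt W i u.length

lemma factorAt_length {A : Type*} (W : ℕ → A) (i n : ℕ) : (factorAt W i n).length = n := by
  simp [factorAt]

lemma take_drop_factorAt {A : Type*} (W : ℕ → A) (q n d k : ℕ) (h : d + k ≤ n) :
    ((factorAt W q n).drop d).take k = factorAt W (q + d) k := by
  apply List.ext_getElem
  · simp [factorAt]; omega
  · intro t h1 h2
    simp [factorAt, add_assoc]

lemma infix_factorAt {A : Type*} {W : ℕ → A} {q n : ℕ} {l : List A}
    (h : l <:+: factorAt W q n) : ∃ d, d + l.length ≤ n ∧ l = factorAt W (q + d) l.length := by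
  obtain ⟨s, t, hst⟩ := h
  have hlen : s.length + (l.length + t.length) = n := by
    have := congrArg List.length hst
    simp [factorAt_length] at this
    omega
  refine ⟨s.length, by omega, ?_⟩
  have hl : l = ((factorAt W q n).drop s.length).take l.length := by
    rw [← hst]
    simp [List.append_assoc, List.drop_left, List.take_left]
  rw [take_drop_factorAt _ _ _ _ _ (by omega)] at hl
  exact hl

lemma factorAt_congr {A : Type*} {W : ℕ → A} {q q' n : ℕ}
    (h : factorAt W q n = factorAt W q' n) : ∀ t < n, W (q + t) = W (q' + t) := by
  intro t ht
  have := congrArg (fun l : List A => l[t]?) h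
  simpa [factorAt, List.getElem?_map, List.getElem?_range, ht] using this

/-- Projecting a uniformly recurrent word with linear recurrence by deleting some letters
yields a word with linear recurrence (if the result is infinite). -/
theorem stmt3 {A : Type*} (W : ℕ → A) (C₃ : ℕ)
    (hrec : ∀ N ≥ 1, ∀ u v : List A, IsFactorOf u W → u.length = C₃ * N →
      IsFactorOf v W → v.length = N → v <:+: u)
    (keep : A → Prop)
    (V : ℕ → A) (e : ℕ → ℕ) (hmono : StrictMono e)
    (hV : ∀ n, V n = W (e n))
    (hkeep : ∀ i, keep (W i) ↔ ∃ n, e n = i) :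
    ∃ C : ℕ, ∀ N ≥ 1, ∀ u v : List A, IsFactorOf u V → u.length = C * N →
      IsFactorOf v V → v.length = N → v <:+: u := by
  classical
  -- C₃ ≥ 1
  have hC₃ : 1 ≤ C₃ := by
    by_contra h
    have hz : C₃ = 0 := by omega
    have h1 : IsFactorOf ([] : List A) W := ⟨0, rfl⟩
    have h2 : IsFactorOf [W (e 0)] W := ⟨e 0, by simp [factorAt, List.range_succ]⟩
    have := hrec 1 le_rfl [] [W (e 0)] h1 (by simp [hz]) h2 rfl
    simp at this
  -- every window of length C₃ contains a kept position
  have hwin : ∀ p : ℕ, ∃ m, p ≤ e m ∧ e m < p + C₃ := by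
    intro p
    have hu : IsFactorOf (factorAt W p C₃) W := ⟨p, by rw [factorAt_length]⟩
    have hv : IsFactorOf [W (e 0)] W := ⟨e 0, by simp [factorAt, List.range_succ]⟩
    have hinf := hrec 1 le_rfl _ _ hu (by simp [factorAt_length]) hv rfl
    obtain ⟨d, hd, hfe⟩ := infix_factorAt hinf
    simp only [List.length_singleton] at hd hfe
    have hW : W (p + d) = W (e 0) := by
      have h' := congrArg (fun l : List A => l[0]?) hfe
      simpa [factorAt, List.range_succ] using h'.symm
    have hk : keep (W (p + d)) := by rw [hW]; exact (hkeep (e 0)).mpr ⟨0, rfl⟩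
    obtain ⟨m, hm⟩ := (hkeep _).mp hk
    exact ⟨m, by omega⟩
  have hgap : ∀ n, e (n + 1) ≤ e n + C₃ := by
    intro n
    obtain ⟨m, h1, h2⟩ := hwin (e n + 1)
    have hnm : n < m := hmono.lt_iff_lt.mp (by omega)
    have := hmono.monotone (show n + 1 ≤ m from hnm)
    omega
  have hgapr : ∀ j r, e (j + r) ≤ e j + C₃ * r := by
    intro j r
    induction r with
    | zero => simp
    | succ r ih =>
      have h1 := hgap (j + r)
      have h2 : C₃ * (r + 1) = C₃ * r + C₃ := by ring
      have h3 : j + (r + 1) = j + r + 1 := rfl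
      rw [h3]
      omega
  have hle : ∀ a b : ℕ, e a + b ≤ e (a + b) := by
    intro a b
    induction b with
    | zero => simp
    | succ b ih =>
      have := hmono (show a + b < a + b + 1 by omega)
      have h3 : a + (b + 1) = a + b + 1 := rfl
      rw [h3]
      omega
  refine ⟨C₃ * C₃, ?_⟩
  intro N hN u v hu hlu hv hlv
  obtain ⟨i, hui⟩ := hu
  obtain ⟨j, hvj⟩ := hv
  set M := C₃ * N with hM
  have hM1 : 1 ≤ M := by
    have := Nat.mul_le_mul hC₃ hN
    omega
  have hu' : IsFactorOf (factorAt W (e i) (C₃ * M)) W := ⟨e i, by rw [factorAt_length]⟩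
  have hv' : IsFactorOf (factorAt W (e j) M) W := ⟨e j, by rw [factorAt_length]⟩
  have hinf := hrec M hM1 _ _ hu' (by rw [factorAt_length]) hv' (factorAt_length _ _ _)
  obtain ⟨d, hd, hfe⟩ := infix_factorAt hinf
  rw [factorAt_length] at hd hfe
  set p := e i + d with hp
  have hpt : ∀ t < M, W (e j + t) = W (p + t) := factorAt_congr hfe
  have htr : ∀ r < N, e (j + r) - e j < M := by
    intro r hr
    have h1 := hgapr j r
    have h2 : C₃ * (r + 1) ≤ C₃ * N := Nat.mul_le_mul_left _ (by omega)
    have h3 : C₃ * (r + 1) = C₃ * r + C₃ := by ring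
    omega
  obtain ⟨m₀, hm₀⟩ : ∃ m, e m = p := by
    have h0 : W (e j) = W p := by simpa using hpt 0 (by omega)
    have hk : keep (W p) := by rw [← h0]; exact (hkeep _).mpr ⟨j, rfl⟩
    exact (hkeep _).mp hk
  have hme : ∀ r < N, e (m₀ + r) = p + (e (j + r) - e j) := by
    intro r
    induction r with
    | zero => intro _; simpa using hm₀
    | succ r ih =>
      intro hr
      have ihr := ih (by omega)
      have htr' := htr r (by omega)
      have ht1 : e (j + (r + 1)) - e j < M := htr (r + 1) hr
      have hej : e j ≤ e (j + r) := hmono.monotone (by omega)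
      have hejs : e (j + r) < e (j + (r + 1)) := hmono (by omega)
      have hW : W (e j + (e (j + (r + 1)) - e j)) = W (p + (e (j + (r + 1)) - e j)) :=
        hpt _ ht1
      have heq : e j + (e (j + (r + 1)) - e j) = e (j + (r + 1)) := by
        have : e j ≤ e (j + (r + 1)) := hmono.monotone (by omega)
        omega
      have hk' : keep (W (p + (e (j + (r + 1)) - e j))) := by
        rw [← hW, heq]; exact (hkeep _).mpr ⟨_, rfl⟩
      obtain ⟨m', hm'⟩ := (hkeep _).mp hk'
      have hm'gt : m₀ + r < m' := by
        apply hmono.lt_iff_lt.mp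
        rw [ihr, hm']
        omega
      have hle' : e (m₀ + r + 1) ≤ p + (e (j + (r + 1)) - e j) := by
        rw [← hm']; exact hmono.monotone hm'gt
      have hgt : p + (e (j + r) - e j) < e (m₀ + r + 1) := by
        rw [← ihr]; exact hmono (by omega)
      by_contra hne
      have hlt : e (m₀ + r + 1) < p + (e (j + (r + 1)) - e j) :=
        lt_of_le_of_ne hle' (by simpa [Nat.add_assoc] using hne)
      set q := e (m₀ + r + 1) with hq
      have hWq : W (e j + (q - p)) = W (p + (q - p)) := hpt _ (by omega)
      have hpq : p + (q - p) = q := by omega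
      have hkq : keep (W (e j + (q - p))) := by
        rw [hWq, hpq]; exact (hkeep _).mpr ⟨_, rfl⟩
      obtain ⟨m'', hm''⟩ := (hkeep _).mp hkq
      have h1 : j + r < m'' := by
        apply hmono.lt_iff_lt.mp
        rw [hm'']
        omega
      have h2 : m'' < j + (r + 1) := by
        apply hmono.lt_iff_lt.mp
        rw [hm'']
        omega
      omega
  have hVr : ∀ r < N, V (m₀ + r) = V (j + r) := by
    intro r hr
    have hej : e j ≤ e (j + r) := hmono.monotone (by omega)
    rw [hV, hV, hme r hr, ← hpt _ (htr r hr)]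
    congr 1
    omega
  have him : i ≤ m₀ := by
    apply hmono.le_iff_le.mp
    rw [hm₀]
    omega
  have hCM : C₃ * M = C₃ * C₃ * N := by rw [hM]; ring
  have hub : m₀ - i + N ≤ C₃ * C₃ * N := by
    have h1 : e (m₀ + (N - 1)) = p + (e (j + (N - 1)) - e j) := hme _ (by omega)
    have h2 : e (j + (N - 1)) - e j < M := htr _ (by omega)
    have h3 : e i + (m₀ + (N - 1) - i) ≤ e (m₀ + (N - 1)) := by
      have := hle i (m₀ + (N - 1) - i)
      have heq : i + (m₀ + (N - 1) - i) = m₀ + (N - 1) := by omega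
      rw [heq] at this
      exact this
    omega
  rw [hui, hvj, hlu, hlv]
  have hkey : factorAt V j N = ((factorAt V i (C₃ * C₃ * N)).drop (m₀ - i)).take N := by
    rw [take_drop_factorAt _ _ _ _ _ hub]
    have heq : i + (m₀ - i) = m₀ := by omega
    rw [heq]
    apply List.ext_getElem (by simp [factorAt_length])
    intro t h1 h2
    simp only [factorAt, List.getElem_map, List.getElem_range]
    have ht : t < N := by simpa [factorAt_length] using h1
    exact (hVr t ht).symm
  rw [hkey]
  exact ((factorAt V i (C₃ * C₃ * N)).drop (m₀ - i)).take_prefix N |>.isInfix.trans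
    ((factorAt V i (C₃ * C₃ * N)).drop_suffix (m₀ - i)).isInfix
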